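/- arXiv:2005.04449 — 3 statements merged into one kernel-verified Lean document; each statement's English description precedes it below -/
import Mathlib

section
/- For every integer n ≥ 2 there exists a constant C = C(n) > 0 such that for every 0 < ε < 1 and every Lipschitz function v : S^{n−1} → ℝ with ‖v‖_{W^{1,∞}(S^{n−1})} ≤ ε and ∫_{S^{n−1}} (1 + v(ξ))^n dH^{n−1} = n ω_n, one has |∫_{S^{n−1}} v(ξ) dH^{n−1} + (n−1)/2 · ∫_{S^{n−1}} v(ξ)² dH^{n−1}| ≤ C ε ∫_{S^{n−1}} v(ξ)² dH^{n−1}. -/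
open MeasureTheory Metric Set Filter

noncomputable section

/-- Euclidean space `ℝ^n`. -/
abbrev Euc (n : ℕ) := EuclideanSpace ℝ (Fin n)

/-- `ω_n`, the volume of the unit ball in `ℝ^n`. -/
def unitBallVol (n : ℕ) : ℝ := (volume (Metric.ball (0 : Euc n) 1)).toReal

/-- The tangential gradient of `v` on the unit sphere `S^{n-1}`, i.e. the gradient at `ξ`
of the `0`-homogeneous extension `x ↦ v (x/|x|)`. -/
def sphGrad {n : ℕ} (v : Euc n → ℝ) (ξ : Euc n) : Euc n :=
  gradient (fun x => v (‖x‖⁻¹ • x)) ξ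

/-- `‖v‖_{W^{1,∞}(S^{n-1})} ≤ ε`: both `|v|` and the tangential gradient `|∇v|`
are bounded by `ε` on the unit sphere. -/
def W1InfLe {n : ℕ} (v : Euc n → ℝ) (ε : ℝ) : Prop :=
  ∀ ξ ∈ Metric.sphere (0 : Euc n) 1, |v ξ| ≤ ε ∧ ‖sphGrad v ξ‖ ≤ ε

/-- `Ω₀` is a nearly spherical set parametrized over the radius-`R` ball by the
Lipschitz function `v` on `S^{n-1}`:  `Ω₀` is open, bounded, contains the origin,
`Ω₀ = {tξ : ξ ∈ S^{n-1}, 0 ≤ t < R(1+v(ξ))}` (equivalently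
`∂Ω₀ = {Rξ(1+v(ξ))}`), and `|Ω₀| = |B_R|` (`R` being the radius of the ball with
the same measure as `Ω₀`). -/
def IsNearlySpherical {n : ℕ} (R : ℝ) (Ω₀ : Set (Euc n)) (v : Euc n → ℝ) : Prop :=
  IsOpen Ω₀ ∧ Bornology.IsBounded Ω₀ ∧ (0 : Euc n) ∈ Ω₀ ∧
  (∃ c : NNReal, LipschitzOnWith c v (Metric.sphere (0 : Euc n) 1)) ∧
  Ω₀ = {x : Euc n | ∃ ξ ∈ Metric.sphere (0 : Euc n) 1,
          ∃ t : ℝ, 0 ≤ t ∧ t < R * (1 + v ξ) ∧ x = t • ξ} ∧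
  volume Ω₀ = volume (Metric.ball (0 : Euc n) R)

/-- The first Steklov–Dirichlet eigenvalue `σ₁(Ω)` of `Ω = Ω₀ \ closure (B_r)`:
the infimum of the Rayleigh quotients
`∫_Ω |∇w|² dx / ∫_{∂Ω₀} w² dH^{n-1}` over Lipschitz functions `w` on `closure Ω`
vanishing on `∂B_r` with `∫_{∂Ω₀} w² dH^{n-1} > 0`. -/
def sigma1 (n : ℕ) (r : ℝ) (Ω₀ : Set (Euc n)) : ℝ :=
  sInf {q : ℝ | ∃ w : Euc n → ℝ,
    (∃ c : NNReal, LipschitzOnWith c w (closure (Ω₀ \ closure (Metric.ball (0 : Euc n) r)))) ∧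
    (∀ x ∈ Metric.sphere (0 : Euc n) r, w x = 0) ∧
    (0 < ∫ x in frontier Ω₀, (w x) ^ 2 ∂(μH[(n : ℝ) - 1])) ∧
    q = (∫ x in Ω₀ \ closure (Metric.ball (0 : Euc n) r), ‖gradient w x‖ ^ 2) /
        (∫ x in frontier Ω₀, (w x) ^ 2 ∂(μH[(n : ℝ) - 1]))}

/-- The explicit value of the first Steklov–Dirichlet eigenvalue of the spherical
shell `A_{r,R}`: `1/(R log(R/r))` if `n = 2`,  `(n-2)/(R((R/r)^{n-2} - 1))` if `n ≥ 3`. -/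
def shellEig (n : ℕ) (r R : ℝ) : ℝ :=
  if n = 2 then 1 / (R * Real.log (R / r))
  else ((n : ℝ) - 2) / (R * ((R / r) ^ (n - 2) - 1))


open Finset in
lemma binom_tail_bound (n : ℕ) (hn : 2 ≤ n) (t : ℝ) (ht : |t| ≤ 1) :
    |(1 + t) ^ n - (1 + (n : ℝ) * t + (n : ℝ) * ((n : ℝ) - 1) / 2 * t ^ 2)|
      ≤ 2 ^ n * |t| * t ^ 2 := by
  have hexp : (1 + t) ^ n = ∑ k ∈ range (n + 1), t ^ k * (n.choose k : ℝ) := by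
    rw [add_comm]
    simpa using add_pow t 1 n
  have hsplit : ∑ k ∈ range (n + 1), t ^ k * (n.choose k : ℝ)
      = (1 + (n : ℝ) * t + (n : ℝ) * ((n : ℝ) - 1) / 2 * t ^ 2)
        + ∑ k ∈ Finset.Ico 3 (n + 1), t ^ k * (n.choose k : ℝ) := by
    rw [range_eq_Ico, ← Finset.sum_Ico_consecutive _ (Nat.zero_le 3) (by omega : 3 ≤ n + 1)]
    congr 1
    rw [← range_eq_Ico, Finset.sum_range_succ, Finset.sum_range_succ, Finset.sum_range_one]
    rw [Nat.cast_choose_two]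
    simp
    ring
  rw [hexp, hsplit, add_sub_cancel_left]
  calc |∑ k ∈ Finset.Ico 3 (n + 1), t ^ k * (n.choose k : ℝ)|
      ≤ ∑ k ∈ Finset.Ico 3 (n + 1), |t ^ k * (n.choose k : ℝ)| :=
        Finset.abs_sum_le_sum_abs _ _
    _ ≤ ∑ k ∈ Finset.Ico 3 (n + 1), |t| ^ 3 * (n.choose k : ℝ) := by
        refine Finset.sum_le_sum fun k hk => ?_
        rw [abs_mul, abs_pow, Nat.abs_cast]
        exact mul_le_mul_of_nonneg_right
          (pow_le_pow_of_le_one (abs_nonneg t) ht (Finset.mem_Ico.mp hk).1)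
          (Nat.cast_nonneg _)
    _ = |t| ^ 3 * ∑ k ∈ Finset.Ico 3 (n + 1), (n.choose k : ℝ) := by
        rw [Finset.mul_sum]
    _ ≤ |t| ^ 3 * ∑ k ∈ range (n + 1), (n.choose k : ℝ) := by
        refine mul_le_mul_of_nonneg_left ?_ (by positivity)
        refine Finset.sum_le_sum_of_subset_of_nonneg ?_ (fun _ _ _ => Nat.cast_nonneg _)
        rw [range_eq_Ico]
        exact Finset.Ico_subset_Ico (Nat.zero_le 3) le_rfl
    _ = |t| ^ 3 * 2 ^ n := by
        rw [← Nat.cast_sum, Nat.sum_range_choose]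
        push_cast; ring
    _ = 2 ^ n * |t| * t ^ 2 := by
        rw [← sq_abs t]; ring

set_option maxHeartbeats 1000000 in
/-- Fuglede's lemma, volume-constraint consequence.
For every `n ≥ 2` there exists `C = C(n) > 0` such that for every `0 < ε < 1` and every
Lipschitz `v : S^{n-1} → ℝ` with `‖v‖_{W^{1,∞}} ≤ ε` and `∫_{S^{n-1}} (1+v)ⁿ dH^{n-1} = n ω_n`,
one has `|∫ v + (n-1)/2 ∫ v²| ≤ C ε ∫ v²`. -/
theorem fuglede_volume_constraint_estimate (n : ℕ) (hn : 2 ≤ n) :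
    ∃ C : ℝ, 0 < C ∧ ∀ ε : ℝ, 0 < ε → ε < 1 →
      ∀ v : Euc n → ℝ,
        (∃ c : NNReal, LipschitzOnWith c v (Metric.sphere (0 : Euc n) 1)) →
        W1InfLe v ε →
        (∫ ξ in Metric.sphere (0 : Euc n) 1, (1 + v ξ) ^ n ∂(μH[(n : ℝ) - 1])) =
          n * unitBallVol n →
        |(∫ ξ in Metric.sphere (0 : Euc n) 1, v ξ ∂(μH[(n : ℝ) - 1])) +
            ((n : ℝ) - 1) / 2 *
              ∫ ξ in Metric.sphere (0 : Euc n) 1, (v ξ) ^ 2 ∂(μH[(n : ℝ) - 1])| ≤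
          C * ε * ∫ ξ in Metric.sphere (0 : Euc n) 1, (v ξ) ^ 2 ∂(μH[(n : ℝ) - 1]) := by

  classical
  have hn2 : (2 : ℝ) ≤ (n : ℝ) := by exact_mod_cast hn
  have hnpos : (0 : ℝ) < (n : ℝ) := by linarith only [hn2]
  set μ : Measure (Euc n) := (μH[(n : ℝ) - 1]).restrict (Metric.sphere (0 : Euc n) 1)
    with hμdef
  set S : ℝ := (μ Set.univ).toReal with hSdef
  set δ : ℝ := (n : ℝ) * unitBallVol n - S with hδdef
  set a : ℝ := (n : ℝ) * ((n : ℝ) - 1) / 2 with ha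
  have ha0 : 0 ≤ a := by rw [ha]; nlinarith only [hn2]
  set K₁ : ℝ := ((n : ℝ) + a + 2 ^ n) * S with hK₁
  set ε₀ : ℝ := |δ| / K₁ with hε₀
  set m : ℝ := min (|δ| / (2 * (a + 2 ^ n))) (δ ^ 2 / (4 * (n : ℝ) ^ 2 * S)) with hm
  set C : ℝ := max ((2 : ℝ) ^ n) ((|δ| + 2 ^ n * S) / ((n : ℝ) * ε₀ * m)) with hCd
  have hCpos : 0 < C := lt_of_lt_of_le (by positivity) (le_max_left _ _)
  have hC2n : (2 : ℝ) ^ n ≤ C := le_max_left _ _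
  refine ⟨C, hCpos, ?_⟩
  intro ε hε hε1 v hLip hW hC
  have hωpos : 0 < (n : ℝ) * unitBallVol n := by
    have h1 : (0 : ENNReal) < volume (Metric.ball (0 : Euc n) 1) :=
      measure_ball_pos _ _ one_pos
    have h2 : volume (Metric.ball (0 : Euc n) 1) ≠ ⊤ := measure_ball_lt_top.ne
    exact mul_pos hnpos (ENNReal.toReal_pos h1.ne' h2)
  obtain ⟨c, hv⟩ := hLip
  have hvc : ContinuousOn v (Metric.sphere (0 : Euc n) 1) := hv.continuousOn
  have hmeas : AEStronglyMeasurable v μ := by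
    rw [hμdef]; exact hvc.aestronglyMeasurable Metric.isClosed_sphere.measurableSet
  have hae : ∀ᵐ x ∂μ, x ∈ Metric.sphere (0 : Euc n) 1 := by
    rw [hμdef]; exact ae_restrict_mem Metric.isClosed_sphere.measurableSet
  have haev : ∀ᵐ x ∂μ, |v x| ≤ ε := hae.mono fun x hx => (hW x hx).1
  -- integrability of (1+v)^n
  have hIf : Integrable (fun x => (1 + v x) ^ n) μ := by
    by_contra h
    rw [integral_undef h] at hC
    exact hωpos.ne' hC.symm
  -- finiteness of μ
  have hcpos : (0 : ℝ) < (1 - ε) ^ n := by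
    have : (0 : ℝ) < 1 - ε := by linarith only [hε1]
    positivity
  have hflb : ∀ᵐ x ∂μ, (1 - ε) ^ n ≤ (1 + v x) ^ n := haev.mono fun x hx => by
    have h1 : 1 - ε ≤ 1 + v x := by have := (abs_le.mp hx).1; linarith only [this]
    exact pow_le_pow_left₀ (by linarith only [hε1]) h1 n
  have hfin : μ Set.univ < ⊤ := by
    have hle : ENNReal.ofReal ((1 - ε) ^ n) * μ Set.univ
        ≤ ∫⁻ x, ‖(1 + v x) ^ n‖₊ ∂μ := by
      rw [← lintegral_const]
      refine lintegral_mono_ae (hflb.mono fun x hx => ?_)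
      rw [← enorm_eq_nnnorm, Real.enorm_eq_ofReal (le_trans hcpos.le hx)]
      exact ENNReal.ofReal_le_ofReal hx
    have hlt : (∫⁻ x, ‖(1 + v x) ^ n‖₊ ∂μ) < ⊤ := hIf.2
    have hz : ENNReal.ofReal ((1 - ε) ^ n) ≠ 0 := by
      rw [Ne, ENNReal.ofReal_eq_zero, not_le]; exact hcpos
    rcases eq_top_or_lt_top (μ Set.univ) with h | h
    · exfalso
      rw [h, ENNReal.mul_top hz] at hle
      exact (lt_irrefl ⊤ (lt_of_le_of_lt hle hlt))
    · exact h
  haveI hfinI : IsFiniteMeasure μ := ⟨hfin⟩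
  have hSpos : 0 < S := by
    rw [hSdef]
    refine ENNReal.toReal_pos (fun h0 => ?_) hfin.ne
    have hz : μ = 0 := Measure.measure_univ_eq_zero.mp h0
    rw [hz, integral_zero_measure] at hC
    exact hωpos.ne' hC.symm
  have hone : (∫ _x, (1 : ℝ) ∂μ) = S := by
    rw [integral_const, smul_eq_mul, mul_one, hSdef, measureReal_def]
  -- integrability
  have int_v : Integrable v μ := by
    refine Integrable.mono' (integrable_const ε) hmeas (haev.mono fun x hx => ?_)
    simpa [Real.norm_eq_abs] using hx
  have hmeas2 : AEStronglyMeasurable (fun x => (v x) ^ 2) μ := by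
    rw [hμdef]; exact (hvc.pow 2).aestronglyMeasurable Metric.isClosed_sphere.measurableSet
  have int_v2 : Integrable (fun x => (v x) ^ 2) μ := by
    refine Integrable.mono' (integrable_const 1) hmeas2 (haev.mono fun x hx => ?_)
    have h1 : |v x| ≤ 1 := hx.trans hε1.le
    rw [Real.norm_eq_abs, abs_pow]
    nlinarith only [abs_nonneg (v x), h1]
  have int_lin : Integrable (fun x => 1 + (n : ℝ) * v x + a * (v x) ^ 2) μ :=
    ((integrable_const 1).add (int_v.const_mul _)).add (int_v2.const_mul _)
  set g : Euc n → ℝ :=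
    fun x => (1 + v x) ^ n - (1 + (n : ℝ) * v x + a * (v x) ^ 2) with hgdef
  have int_g : Integrable g μ := hIf.sub int_lin
  set I₁ : ℝ := ∫ x, v x ∂μ with hI₁def
  set I₂ : ℝ := ∫ x, (v x) ^ 2 ∂μ with hI₂def
  set E : ℝ := ∫ x, g x ∂μ with hEdef
  have hI₂0 : 0 ≤ I₂ := integral_nonneg fun x => sq_nonneg _
  have hI₂S : I₂ ≤ ε ^ 2 * S := by
    have h1 : I₂ ≤ ∫ _x, ε ^ 2 ∂μ := by
      refine integral_mono_ae int_v2 (integrable_const _) (haev.mono fun x hx => ?_)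
      calc v x ^ 2 = |v x| ^ 2 := (sq_abs _).symm
        _ ≤ ε ^ 2 := pow_le_pow_left₀ (abs_nonneg _) hx 2
    rw [integral_const, smul_eq_mul, measureReal_def] at h1
    rw [hSdef]; linarith only [h1]
  have hI₂S' : I₂ ≤ S := by
    have hε2 : ε ^ 2 ≤ 1 := by nlinarith only [hε, hε1]
    calc I₂ ≤ ε ^ 2 * S := hI₂S
      _ ≤ 1 * S := mul_le_mul_of_nonneg_right hε2 hSpos.le
      _ = S := one_mul S
  have hJ0 : 0 ≤ ∫ x, |v x| ∂μ := integral_nonneg fun x => abs_nonneg _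
  have hI₁J : |I₁| ≤ ∫ x, |v x| ∂μ := by
    rw [hI₁def]
    simpa [Real.norm_eq_abs] using norm_integral_le_integral_norm (μ := μ) v
  have hI₁abs : |I₁| ≤ ε * S := by
    refine hI₁J.trans ?_
    have h2 : (∫ x, |v x| ∂μ) ≤ ∫ _x, ε ∂μ :=
      integral_mono_ae int_v.abs (integrable_const _) haev
    rw [integral_const, smul_eq_mul, measureReal_def] at h2
    rw [hSdef]; linarith only [h2]
  -- bound on E
  have hE : |E| ≤ 2 ^ n * ε * I₂ := by
    have h1 : |E| ≤ ∫ x, |g x| ∂μ := by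
      rw [hEdef]
      simpa [Real.norm_eq_abs] using norm_integral_le_integral_norm (μ := μ) g
    have h2 : (∫ x, |g x| ∂μ) ≤ ∫ x, 2 ^ n * ε * (v x) ^ 2 ∂μ := by
      refine integral_mono_ae int_g.abs ((int_v2.const_mul _)) ?_
      refine haev.mono fun x hx => ?_
      have h3 := binom_tail_bound n hn (v x) (hx.trans hε1.le)
      have h4 : |g x| ≤ 2 ^ n * |v x| * (v x) ^ 2 := by
        rw [hgdef]; exact h3
      refine h4.trans ?_
      show (2:ℝ) ^ n * |v x| * (v x) ^ 2 ≤ 2 ^ n * ε * (v x) ^ 2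
      exact mul_le_mul_of_nonneg_right
        (mul_le_mul_of_nonneg_left hx (by positivity)) (sq_nonneg _)
    rw [integral_const_mul] at h2
    linarith only [h1, h2]
  have hE' : |E| ≤ 2 ^ n * I₂ := by
    refine hE.trans ?_
    have hkey := mul_nonneg (mul_nonneg (pow_nonneg (by norm_num : (0:ℝ) ≤ 2) n)
      (sub_nonneg.mpr hε1.le)) hI₂0
    nlinarith only [hkey]
  -- expansion of the constraint
  have intA : Integrable (fun x => 1 + (n : ℝ) * v x) μ :=
    (integrable_const 1).add (int_v.const_mul _)
  have hexpand : S + (n : ℝ) * I₁ + a * I₂ + E = (n : ℝ) * unitBallVol n := by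
    rw [← hC]
    have hid : (fun x => (1 + v x) ^ n)
        = fun x => (1 + (n : ℝ) * v x + a * (v x) ^ 2) + g x := by
      funext x; rw [hgdef]; ring
    rw [hid, integral_add int_lin int_g,
      integral_add intA (int_v2.const_mul _),
      integral_add (integrable_const 1) (int_v.const_mul _),
      integral_const_mul, integral_const_mul, hone, ← hI₁def, ← hI₂def, ← hEdef]
  have hδeq : δ = (n : ℝ) * I₁ + a * I₂ + E := by rw [hδdef]; linarith only [hexpand]
  have hkey2 : (n : ℝ) * (I₁ + ((n : ℝ) - 1) / 2 * I₂) = δ - E := by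
    rw [hδeq, ha]; ring
  have habsJ : |δ - E| = (n : ℝ) * |I₁ + ((n : ℝ) - 1) / 2 * I₂| := by
    rw [← hkey2, abs_mul, abs_of_pos hnpos]
  have h2n0 : (0 : ℝ) < 2 ^ n := by positivity
  have hmain : |δ - E| ≤ (n : ℝ) * (C * ε * I₂) := by
    by_cases hδ0 : δ = 0
    · rw [hδ0, zero_sub, abs_neg]
      calc |E| ≤ 2 ^ n * ε * I₂ := hE
        _ ≤ C * ε * I₂ :=
          mul_le_mul_of_nonneg_right (mul_le_mul_of_nonneg_right hC2n hε.le) hI₂0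
        _ ≤ (n : ℝ) * (C * ε * I₂) := by
            refine le_mul_of_one_le_left ?_ (by linarith only [hn2])
            exact mul_nonneg (mul_nonneg hCpos.le hε.le) hI₂0
    · have hδabs : 0 < |δ| := abs_pos.mpr hδ0
      have hK₁pos : 0 < K₁ := by
        rw [hK₁]
        exact mul_pos (by linarith only [hnpos, ha0, h2n0]) hSpos
      have habs3 : |δ| ≤ (n : ℝ) * |I₁| + a * I₂ + |E| := by
        rw [hδeq]
        calc |(n : ℝ) * I₁ + a * I₂ + E| ≤ |(n : ℝ) * I₁ + a * I₂| + |E| := abs_add_le _ _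
          _ ≤ |(n : ℝ) * I₁| + |a * I₂| + |E| := by
              linarith only [abs_add_le ((n : ℝ) * I₁) (a * I₂)]
          _ = (n : ℝ) * |I₁| + a * I₂ + |E| := by
              rw [abs_mul, abs_mul, abs_of_pos hnpos, abs_of_nonneg ha0,
                abs_of_nonneg hI₂0]
      have hδle : |δ| ≤ K₁ * ε := by
        rw [hK₁]
        have t1 : (n : ℝ) * |I₁| ≤ (n : ℝ) * (ε * S) :=
          mul_le_mul_of_nonneg_left hI₁abs hnpos.le
        have t2 : a * I₂ ≤ a * (ε * S) := by
          refine mul_le_mul_of_nonneg_left ?_ ha0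
          have hεS : ε ^ 2 * S ≤ ε * S := by
            have h10 := mul_nonneg (mul_nonneg hε.le (sub_nonneg.mpr hε1.le)) hSpos.le
            nlinarith only [h10]
          linarith only [hI₂S, hεS]
        have t3 : |E| ≤ 2 ^ n * (ε * S) := by
          refine hE.trans ?_
          have h9 := mul_le_mul_of_nonneg_left hI₂S' (mul_nonneg h2n0.le hε.le)
          linarith only [h9]
        linarith only [habs3, t1, t2, t3]
      have hε₀le : ε₀ ≤ ε := by
        rw [hε₀, div_le_iff₀ hK₁pos]
        linarith only [hδle]
      have hε₀pos : 0 < ε₀ := by rw [hε₀]; exact div_pos hδabs hK₁pos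
      have hδ2 : 0 < δ ^ 2 := by rw [← sq_abs]; exact pow_pos hδabs 2
      have hmpos : 0 < m := by
        rw [hm]
        exact lt_min (div_pos hδabs (by linarith only [ha0, h2n0])) (div_pos hδ2 (by positivity))
      have hI₂m : m ≤ I₂ := by
        rcases le_or_gt (|δ| / 2) ((a + 2 ^ n) * I₂) with hcase | hcase
        · rw [hm]
          refine (min_le_left _ _).trans ?_
          rw [div_le_iff₀ (by linarith only [ha0, h2n0] : (0 : ℝ) < 2 * (a + 2 ^ n))]
          linarith only [hcase]
        · have hnI₁ : |δ| / 2 ≤ (n : ℝ) * |I₁| := by linarith only [habs3, hE', hcase]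
          set θ : ℝ := |δ| / (2 * (n : ℝ) * S) with hθ
          have hθpos : 0 < θ := by rw [hθ]; exact div_pos hδabs (by positivity)
          have hθval : θ * (2 * (n : ℝ) * S) = |δ| := by
            rw [hθ]; field_simp
          have hamgm : 2 * θ * (∫ x, |v x| ∂μ) ≤ I₂ + θ ^ 2 * S := by
            have hpt : ∀ᵐ x ∂μ, 2 * θ * |v x| ≤ (v x) ^ 2 + θ ^ 2 :=
              haev.mono fun x _ => by
                nlinarith only [sq_nonneg (|v x| - θ), sq_abs (v x)]
            have h2' : (∫ x, 2 * θ * |v x| ∂μ) ≤ ∫ x, ((v x) ^ 2 + θ ^ 2) ∂μ :=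
              integral_mono_ae (int_v.abs.const_mul _)
                (int_v2.add (integrable_const _)) hpt
            rw [integral_const_mul, integral_add int_v2 (integrable_const _),
              integral_const, smul_eq_mul, measureReal_def, ← hSdef] at h2'
            linarith only [h2']
          have hJδ : |δ| ≤ 2 * (n : ℝ) * (∫ x, |v x| ∂μ) := by
            have h5 := mul_le_mul_of_nonneg_left hI₁J hnpos.le
            linarith only [hnI₁, h5]
          rw [hm]
          refine (min_le_right _ _).trans ?_
          rw [div_le_iff₀ (by positivity : (0 : ℝ) < 4 * (n : ℝ) ^ 2 * S)]
          have hP : (0 : ℝ) ≤ 4 * (n : ℝ) ^ 2 * S := by positivity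
          have A := mul_le_mul_of_nonneg_left hamgm hP
          have B := mul_le_mul_of_nonneg_left hJδ (abs_nonneg δ)
          have hp1 : θ * (2 * (n : ℝ) * S) * ((n : ℝ) * (∫ x, |v x| ∂μ))
              = |δ| * ((n : ℝ) * (∫ x, |v x| ∂μ)) := by rw [hθval]
          have hp2 : (θ * (2 * (n : ℝ) * S)) ^ 2 = |δ| ^ 2 := by rw [hθval]
          linarith only [A, B, hp1, hp2, sq_abs δ]
      have hd : 0 < (n : ℝ) * ε₀ * m := mul_pos (mul_pos hnpos hε₀pos) hmpos
      have hrat : |δ| + 2 ^ n * S ≤ C * ((n : ℝ) * ε₀ * m) := by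
        have h6 : (|δ| + 2 ^ n * S) / ((n : ℝ) * ε₀ * m) ≤ C := by
          rw [hCd]; exact le_max_right _ _
        rw [div_le_iff₀ hd] at h6
        linarith only [h6]
      have hES : |E| ≤ 2 ^ n * S :=
        hE'.trans (mul_le_mul_of_nonneg_left hI₂S' h2n0.le)
      have h7 : (n : ℝ) * ε₀ * m ≤ (n : ℝ) * ε * I₂ :=
        mul_le_mul (mul_le_mul_of_nonneg_left hε₀le hnpos.le) hI₂m hmpos.le
          (mul_nonneg hnpos.le hε.le)
      calc |δ - E| ≤ |δ| + |E| := abs_sub δ E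
        _ ≤ |δ| + 2 ^ n * S := by linarith only [hES]
        _ ≤ C * ((n : ℝ) * ε₀ * m) := hrat
        _ ≤ C * ((n : ℝ) * ε * I₂) := mul_le_mul_of_nonneg_left h7 hCpos.le
        _ = (n : ℝ) * (C * ε * I₂) := by ring
  rw [habsJ] at hmain
  exact le_of_mul_le_mul_left hmain hnpos

end
end

section
/- Let n ≥ 3 and 0 < r < R, and define z : ℝ^n \ {0} → ℝ by z(x) = r^{2−n} − |x|^{2−n}. Then: (i) z is harmonic on the shell A_{r,R} = {r < |x| < R} (its Laplacian, the sum of its second pure partial derivatives, vanishes there); (ii) z = 0 on the sphere {|x| = r}; and (iii) for every x with |x| = R, the outward normal derivative ∇z(x)·(x/|x|) equals σ · z(x) with σ = (n−2)/(R((R/r)^{n−2} − 1)). Hence z is an eigenfunction of the Steklov–Dirichlet problem on A_{r,R} with eigenvalue σ. -/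
open Metric
open scoped RealInnerProductSpace

noncomputable section

/-- The radial function `z(x) = r^{2-n} - |x|^{2-n}` (dimension `n ≥ 3`). -/
def zShell (n : ℕ) (r : ℝ) (x : Euc n) : ℝ := r ^ (2 - (n : ℤ)) - ‖x‖ ^ (2 - (n : ℤ))

section Aux
open Topology Filter

lemma zShell_eq (n : ℕ) (hn : 3 ≤ n) (r : ℝ) :
    zShell n r = fun x : Euc n => r ^ (2 - (n : ℤ)) - (‖x‖ ^ 2 : ℝ) ^ ((2 - (n:ℝ))/2) := by
  funext x
  unfold zShell
  congr 1
  rcases eq_or_ne x 0 with h | h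
  · subst h
    rw [norm_zero, zero_zpow _ (by omega), zero_pow (two_ne_zero), Real.zero_rpow]
    have : (n:ℝ) ≥ 3 := by exact_mod_cast hn
    intro hc
    nlinarith [hc]
  · have h0 : (0:ℝ) < ‖x‖ := norm_pos_iff.mpr h
    rw [← Real.rpow_natCast ‖x‖ 2, ← Real.rpow_mul h0.le, ← Real.rpow_intCast ‖x‖]
    congr 1
    push_cast
    ring

lemma hasFDerivAt_zShell (n : ℕ) (hn : 3 ≤ n) (r : ℝ) {x : Euc n} (hx : x ≠ 0) :
    HasFDerivAt (zShell n r)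
      ((((n:ℝ) - 2) * ((‖x‖ ^ 2 : ℝ) ^ (-(n:ℝ)/2))) • innerSL ℝ x) x := by
  rw [zShell_eq n hn r]
  have hx0 : (0:ℝ) < ‖x‖ := norm_pos_iff.mpr hx
  have hs : (‖x‖ ^ 2 : ℝ) ≠ 0 := by positivity
  have h1 : HasFDerivAt (fun y : Euc n => (‖y‖ ^ 2 : ℝ)) (2 • innerSL ℝ x) x :=
    (hasStrictFDerivAt_norm_sq x).hasFDerivAt
  have h2 := h1.rpow_const (p := (2 - (n:ℝ))/2) (Or.inl hs)
  have h3 := (hasFDerivAt_const (r ^ (2 - (n:ℤ)) : ℝ) x).sub h2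
  refine h3.congr_fderiv ?_
  ext v
  have he : (2 - (n:ℝ))/2 - 1 = -(n:ℝ)/2 := by ring
  simp [he, smul_smul]
  ring

lemma gradient_zShell (n : ℕ) (hn : 3 ≤ n) (r : ℝ) {x : Euc n} (hx : x ≠ 0) :
    gradient (zShell n r) x = ((((n:ℝ) - 2) * ((‖x‖ ^ 2 : ℝ) ^ (-(n:ℝ)/2)))) • x := by
  apply HasGradientAt.gradient
  rw [hasGradientAt_iff_hasFDerivAt]
  refine (hasFDerivAt_zShell n hn r hx).congr_fderiv ?_
  ext v
  simp [InnerProductSpace.toDual_apply_apply, real_inner_smul_left]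

lemma zShell_laplacian (n : ℕ) (hn : 3 ≤ n) (r : ℝ) (hr : 0 < r) :
    ∀ x : Euc n, r < ‖x‖ →
      ∑ i : Fin n,
        fderiv ℝ (fun y => fderiv ℝ (zShell n r) y (EuclideanSpace.single i 1)) x
          (EuclideanSpace.single i 1) = 0 := by
  intro x hrx
  have hx : x ≠ 0 := by
    intro h; rw [h, norm_zero] at hrx; exact absurd hrx (not_lt.mpr hr.le)
  have hx0 : (0:ℝ) < ‖x‖ := norm_pos_iff.mpr hx
  have hs : (‖x‖ ^ 2 : ℝ) ≠ 0 := by positivity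
  have hsp : (0:ℝ) < ‖x‖ ^ 2 := by positivity
  set E : Fin n → Euc n := fun i => EuclideanSpace.single i (1:ℝ) with hE
  have hev : ∀ i : Fin n, (fun y => fderiv ℝ (zShell n r) y (E i)) =ᶠ[𝓝 x]
      (fun y => (((n:ℝ) - 2) * ((‖y‖ ^ 2 : ℝ) ^ (-(n:ℝ)/2))) * ⟪E i, y⟫) := by
    intro i
    filter_upwards [IsOpen.mem_nhds isOpen_compl_singleton hx] with y hy
    rw [(hasFDerivAt_zShell n hn r hy).fderiv]
    simp [real_inner_comm]
  have hA : HasFDerivAt (fun y : Euc n => (((n:ℝ) - 2) * ((‖y‖ ^ 2 : ℝ) ^ (-(n:ℝ)/2))))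
      ((((n:ℝ) - 2)) • (((-(n:ℝ)/2) * (‖x‖ ^ 2 : ℝ) ^ (-(n:ℝ)/2 - 1)) • (2 • innerSL ℝ x))) x :=
    (((hasStrictFDerivAt_norm_sq x).hasFDerivAt.rpow_const (Or.inl hs))).const_mul _
  have hgi : ∀ i : Fin n, HasFDerivAt
      (fun y => (((n:ℝ) - 2) * ((‖y‖ ^ 2 : ℝ) ^ (-(n:ℝ)/2))) * ⟪E i, y⟫)
      (((((n:ℝ) - 2) * ((‖x‖ ^ 2 : ℝ) ^ (-(n:ℝ)/2)))) • (innerSL ℝ (E i)) +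
        (⟪E i, x⟫) • ((((n:ℝ) - 2)) • (((-(n:ℝ)/2) * (‖x‖ ^ 2 : ℝ) ^ (-(n:ℝ)/2 - 1)) •
          (2 • innerSL ℝ x)))) x := by
    intro i
    exact hA.mul (innerSL ℝ (E i)).hasFDerivAt
  have hterm : ∀ i : Fin n,
      fderiv ℝ (fun y => fderiv ℝ (zShell n r) y (E i)) x (E i) =
        (((n:ℝ) - 2) * ((‖x‖ ^ 2 : ℝ) ^ (-(n:ℝ)/2))) +
        (((n:ℝ) - 2) * ((-(n:ℝ)/2) * (‖x‖ ^ 2 : ℝ) ^ (-(n:ℝ)/2 - 1)) * 2) * (x i * x i) := by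
    intro i
    rw [(hev i).fderiv_eq, (hgi i).fderiv]
    simp [hE, EuclideanSpace.inner_single_left, EuclideanSpace.inner_single_right]
    ring
  rw [Finset.sum_congr rfl (fun i _ => hterm i)]
  rw [Finset.sum_add_distrib, Finset.sum_const, ← Finset.mul_sum]
  have hsum : ∑ i : Fin n, x i * x i = (‖x‖ ^ 2 : ℝ) := by
    rw [EuclideanSpace.norm_sq_eq]
    simp [Real.norm_eq_abs, sq]
  rw [hsum]
  have hqq : (‖x‖ ^ 2 : ℝ) ^ (-(n:ℝ)/2 - 1) * (‖x‖ ^ 2 : ℝ) = (‖x‖ ^ 2 : ℝ) ^ (-(n:ℝ)/2) := by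
    nth_rewrite 2 [← Real.rpow_one (‖x‖ ^ 2 : ℝ)]
    rw [← Real.rpow_add hsp]
    ring_nf
  simp only [Finset.card_univ, Fintype.card_fin, nsmul_eq_mul]
  linear_combination (2 * ((n:ℝ) - 2) * (-(n:ℝ)/2)) * hqq

end Aux

/-- Let `n ≥ 3` and `0 < r < R`, and let `z(x) = r^{2-n} - |x|^{2-n}`.
Then (i) `z` is harmonic on the shell `A_{r,R}` (the sum of its second pure partial
derivatives vanishes there); (ii) `z = 0` on the sphere `{|x| = r}`; and (iii) on
`{|x| = R}` the outward normal derivative `∇z(x)·(x/|x|)` equals `σ z(x)` with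
`σ = (n-2)/(R((R/r)^{n-2} - 1))`.  Hence `z` is a Steklov–Dirichlet eigenfunction on
`A_{r,R}` with eigenvalue `σ`. -/
theorem zShell_is_steklov_dirichlet_eigenfunction (n : ℕ) (hn : 3 ≤ n) (r R : ℝ)
    (hr : 0 < r) (hrR : r < R) :
    (∀ x : Euc n, r < ‖x‖ → ‖x‖ < R →
      ∑ i : Fin n,
        fderiv ℝ (fun y => fderiv ℝ (zShell n r) y (EuclideanSpace.single i 1)) x
          (EuclideanSpace.single i 1) = 0) ∧
    (∀ x : Euc n, ‖x‖ = r → zShell n r x = 0) ∧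
    (∀ x : Euc n, ‖x‖ = R →
      ⟪gradient (zShell n r) x, ‖x‖⁻¹ • x⟫ =
        (((n : ℝ) - 2) / (R * ((R / r) ^ (n - 2) - 1))) * zShell n r x) := by
  refine ⟨fun x hrx _ => zShell_laplacian n hn r hr x hrx, ?_, ?_⟩
  · intro x hxr
    unfold zShell
    rw [hxr, sub_self]
  · intro x hxR
    have hR : (0:ℝ) < R := hr.trans hrR
    have hx : x ≠ 0 := by
      intro h; rw [h, norm_zero] at hxR; exact hR.ne' hxR.symm
    rw [gradient_zShell n hn r hx, real_inner_smul_left, real_inner_smul_right,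
      real_inner_self_eq_norm_sq, hxR]
    unfold zShell
    rw [hxR]
    obtain ⟨m, hm⟩ : ∃ m : ℕ, n = m + 3 := ⟨n - 3, by omega⟩
    subst hm
    have hrp : ((R:ℝ) ^ 2 : ℝ) ^ (-(↑(m+3):ℝ)/2) = (R ^ (m+3))⁻¹ := by
      rw [← Real.rpow_natCast R 2, ← Real.rpow_mul hR.le]
      rw [show ((2:ℕ):ℝ) * (-(↑(m+3):ℝ)/2) = -((m+3:ℕ):ℝ) by push_cast; ring]
      rw [Real.rpow_neg hR.le, Real.rpow_natCast]
    rw [hrp]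
    have hzr : (r:ℝ) ^ (2 - ((m+3:ℕ):ℤ)) = (r ^ (m+1))⁻¹ := by
      rw [show (2 - ((m+3:ℕ):ℤ)) = -((m+1:ℕ):ℤ) by push_cast; ring, zpow_neg, zpow_natCast]
    have hzR : (R:ℝ) ^ (2 - ((m+3:ℕ):ℤ)) = (R ^ (m+1))⁻¹ := by
      rw [show (2 - ((m+3:ℕ):ℤ)) = -((m+1:ℕ):ℤ) by push_cast; ring, zpow_neg, zpow_natCast]
    rw [hzr, hzR]
    rw [show (m+3-2) = m+1 from rfl]
    have hrm : (r:ℝ)^(m+1) ≠ 0 := by positivity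
    have hRm : (R:ℝ)^(m+1) ≠ 0 := by positivity
    have hne : ((R/r:ℝ))^(m+1) - 1 ≠ 0 := by
      have h1 : (1:ℝ) < R/r := (one_lt_div hr).mpr hrR
      have h2 := one_lt_pow₀ h1 (Nat.succ_ne_zero m)
      rw [Nat.succ_eq_add_one] at h2
      linarith
    have key : ((R/r:ℝ))^(m+1) = R^(m+1)/r^(m+1) := div_pow R r (m+1)
    rw [key] at hne ⊢
    have hba : R ^ (m+1) - r ^ (m+1) ≠ 0 := by
      have := pow_lt_pow_left₀ hrR hr.le (Nat.succ_ne_zero m)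
      rw [Nat.succ_eq_add_one] at this
      exact sub_ne_zero.mpr this.ne'
    rw [div_sub_one hrm]
    push_cast
    have hR3 : R ^ (m+3) = R ^ (m+1) * R ^ 2 := by ring
    rw [hR3]
    field_simp

end
end

section
/- Let n = 2 and ω > 0 be fixed, and for r > 0 set R(r) = (r² + ω/π)^{1/2}, so that the annulus A_{r,R(r)} has area ω. Then σ₁(A_{r,R(r)}) = 1 / ( R(r) log(R(r)/r) ) tends to +∞ as r → +∞. -/
open Filter Topology

noncomputable section

/-- The outer radius making the annulus `A_{r,R(r)}` have area `ω`: `R(r) = (r² + ω/π)^{1/2}`. -/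
def outerRadius2 (ω r : ℝ) : ℝ := Real.sqrt (r ^ 2 + ω / Real.pi)

/-- Let `n = 2` and `ω > 0`; for `r > 0` set `R(r) = (r² + ω/π)^{1/2}`,
so that the annulus `A_{r,R(r)}` has area `ω`.  Then
`σ₁(A_{r,R(r)}) = 1/(R(r) log(R(r)/r))` tends to `+∞` as `r → +∞`. -/
theorem annulus_eigenvalue_area_constraint_tendsto_atTop (ω : ℝ) (hω : 0 < ω) :
    Tendsto (fun r : ℝ => 1 / (outerRadius2 ω r * Real.log (outerRadius2 ω r / r)))
      atTop atTop := by
  set c := ω / Real.pi with hc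
  have hcpos : 0 < c := div_pos hω Real.pi_pos
  set s := Real.sqrt c with hs
  have hspos : 0 < s := Real.sqrt_pos.mpr hcpos
  have hs2 : s ^ 2 = c := Real.sq_sqrt hcpos.le
  -- basic facts about R for r > 0
  have hfacts : ∀ r : ℝ, 0 < r →
      0 < outerRadius2 ω r ∧ r < outerRadius2 ω r ∧
      (outerRadius2 ω r) ^ 2 = r ^ 2 + c ∧ outerRadius2 ω r ≤ r + s := by
    intro r hr
    have hnn : (0:ℝ) ≤ r ^ 2 + c := by positivity
    have hR2 : (outerRadius2 ω r) ^ 2 = r ^ 2 + c := Real.sq_sqrt hnn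
    have hRr : r < outerRadius2 ω r := by
      have h0 : (0:ℝ) ≤ outerRadius2 ω r := Real.sqrt_nonneg _
      nlinarith [hR2, h0]
    have hRs : outerRadius2 ω r ≤ r + s := by
      have : r ^ 2 + c ≤ (r + s) ^ 2 := by nlinarith [mul_pos hr hspos]
      calc outerRadius2 ω r = Real.sqrt (r ^ 2 + c) := rfl
        _ ≤ Real.sqrt ((r + s) ^ 2) := Real.sqrt_le_sqrt this
        _ = r + s := Real.sqrt_sq (by positivity)
    exact ⟨lt_trans hr hRr, hRr, hR2, hRs⟩
  have key : Tendsto (fun r : ℝ => outerRadius2 ω r * Real.log (outerRadius2 ω r / r))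
      atTop (nhdsWithin 0 (Set.Ioi 0)) := by
    rw [tendsto_nhdsWithin_iff]
    constructor
    · -- squeeze between 0 and g r = (r+s)*c/(2*r^2)
      have hg : Tendsto (fun r : ℝ => (r + s) * c / (2 * r ^ 2)) atTop (𝓝 0) := by
        have h1 : Tendsto (fun r : ℝ => c / (2 * r)) atTop (𝓝 0) :=
          Tendsto.div_atTop tendsto_const_nhds
            (Tendsto.const_mul_atTop two_pos tendsto_id)
        have h2 : Tendsto (fun r : ℝ => s * c / (2 * r ^ 2)) atTop (𝓝 0) :=
          Tendsto.div_atTop tendsto_const_nhds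
            (Tendsto.const_mul_atTop two_pos (tendsto_pow_atTop two_ne_zero))
        have := h1.add h2
        rw [add_zero] at this
        refine this.congr' ?_
        filter_upwards [eventually_gt_atTop (0:ℝ)] with r hr
        field_simp
      refine tendsto_of_tendsto_of_tendsto_of_le_of_le' tendsto_const_nhds hg ?_ ?_
      · filter_upwards [eventually_gt_atTop (0:ℝ)] with r hr
        obtain ⟨hR0, hRr, hR2, hRs⟩ := hfacts r hr
        have : 0 < Real.log (outerRadius2 ω r / r) :=
          Real.log_pos ((one_lt_div hr).mpr hRr)
        positivity
      · filter_upwards [eventually_gt_atTop (0:ℝ)] with r hr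
        obtain ⟨hR0, hRr, hR2, hRs⟩ := hfacts r hr
        set R := outerRadius2 ω r
        have hL : Real.log (R / r) ≤ R / r - 1 :=
          Real.log_le_sub_one_of_pos (div_pos hR0 hr)
        have h1 : R * Real.log (R / r) ≤ R * (R / r - 1) :=
          mul_le_mul_of_nonneg_left hL hR0.le
        have h2 : R * (R / r - 1) ≤ (r + s) * c / (2 * r ^ 2) := by
          rw [show R * (R / r - 1) = R * (R - r) / r by field_simp,
            div_le_div_iff₀ hr (by positivity)]
          have h3 : 2 * r * (R - r) ≤ c := by nlinarith
          calc R * (R - r) * (2 * r ^ 2) = (r * R) * (2 * r * (R - r)) := by ring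
            _ ≤ (r * R) * c := mul_le_mul_of_nonneg_left h3 (by positivity)
            _ ≤ (r * (r + s)) * c := mul_le_mul_of_nonneg_right (mul_le_mul_of_nonneg_left hRs hr.le) hcpos.le
            _ = (r + s) * c * r := by ring
        linarith
    · filter_upwards [eventually_gt_atTop (0:ℝ)] with r hr
      obtain ⟨hR0, hRr, hR2, hRs⟩ := hfacts r hr
      exact mul_pos hR0 (Real.log_pos ((one_lt_div hr).mpr hRr))
  have := tendsto_inv_nhdsGT_zero.comp key
  simpa only [Function.comp_def, one_div] using this

end
end
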